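/- arXiv:math/0110038 — 4 statements merged into one kernel-verified Lean document; each statement's English description precedes it below -/
import Mathlib

section
/- Let q be a nonzero complex number with q ≠ ±1, and let A be a complex associative unital algebra with elements I21, I32 satisfying I21²I32 − (q+q⁻¹)I21·I32·I21 + I32·I21² = −I32 and I21·I32² − (q+q⁻¹)I32·I21·I32 + I32²·I21 = −I21. Define I31 := q^{1/2}·I21·I32 − q^{-1/2}·I32·I21 (for a fixed square root q^{1/2} of q). Then the three q-commutation relations hold: q^{1/2}I21·I32 − q^{-1/2}I32·I21 = I31, q^{1/2}I32·I31 − q^{-1/2}I31·I32 = I21, and q^{1/2}I31·I21 − q^{-1/2}I21·I31 = I32. -/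
/-!
Both trilinear relations are q-commutators of q-commutators in disguise: expanding
`[I32, [I21, I32]_q]_q` and `[[I21, I32]_q, I21]_q` gives `s² + s⁻² = q + q⁻¹` times the middle
term minus the two outer terms, i.e. exactly minus the left-hand sides of the defining relations.
-/

section QCommutator

variable {K A : Type*} [Field K] [Ring A] [Algebra K A]

/-- The q-commutator `[a, b]_q`, with `s` playing the role of `q^{1/2}`. -/
def qComm (s : K) (a b : A) : A :=
  s • (a * b) - s⁻¹ • (b * a)

theorem qComm_right_qComm {s : K} (hs : s ≠ 0) (x y : A) :
    qComm s y (qComm s x y) = -(x * y ^ 2 - (s ^ 2 + (s ^ 2)⁻¹) • (y * x * y) + y ^ 2 * x) := by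
  simp only [qComm, mul_sub, sub_mul, mul_smul_comm, smul_mul_assoc, smul_sub, smul_smul,
    pow_two, mul_assoc]
  match_scalars <;> field_simp
  ring

theorem qComm_left_qComm {s : K} (hs : s ≠ 0) (x y : A) :
    qComm s (qComm s x y) x = -(x ^ 2 * y - (s ^ 2 + (s ^ 2)⁻¹) • (x * y * x) + y * x ^ 2) := by
  simp only [qComm, mul_sub, sub_mul, mul_smul_comm, smul_mul_assoc, smul_sub, smul_smul,
    pow_two, mul_assoc]
  match_scalars <;> field_simp
  ring

end QCommutator

theorem stmt_0_general (q s : ℂ) (hq : q ≠ 0)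
    (hs : s ^ 2 = q)
    {A : Type*} [Ring A] [Algebra ℂ A] (I21 I32 : A)
    (r1 : I21 ^ 2 * I32 - (q + q⁻¹) • (I21 * I32 * I21) + I32 * I21 ^ 2 = -I32)
    (r2 : I21 * I32 ^ 2 - (q + q⁻¹) • (I32 * I21 * I32) + I32 ^ 2 * I21 = -I21) :
    let I31 := s • (I21 * I32) - s⁻¹ • (I32 * I21)
    s • (I21 * I32) - s⁻¹ • (I32 * I21) = I31 ∧
    s • (I32 * I31) - s⁻¹ • (I31 * I32) = I21 ∧
    s • (I31 * I21) - s⁻¹ • (I21 * I31) = I32 := by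
  subst hs
  have hs0 : s ≠ 0 := by rintro rfl; simp at hq
  refine ⟨rfl, ?_, ?_⟩
  · change qComm s I32 (qComm s I21 I32) = I21
    rw [qComm_right_qComm hs0, r2, neg_neg]
  · change qComm s (qComm s I21 I32) I21 = I32
    rw [qComm_left_qComm hs0, r1, neg_neg]

/-- In any complex unital algebra with elements `I21`, `I32` satisfying the
defining trilinear relations of `U'_q(so_3)`, the element
`I31 := q^{1/2} I21 I32 - q^{-1/2} I32 I21` satisfies the three q-commutation relations.
Here `s` is a fixed square root of `q`. -/
theorem stmt_0 (q s : ℂ) (hq : q ≠ 0) (hq1 : q ≠ 1) (hqm1 : q ≠ -1)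
    (hs : s ^ 2 = q)
    {A : Type*} [Ring A] [Algebra ℂ A] (I21 I32 : A)
    (r1 : I21 ^ 2 * I32 - (q + q⁻¹) • (I21 * I32 * I21) + I32 * I21 ^ 2 = -I32)
    (r2 : I21 * I32 ^ 2 - (q + q⁻¹) • (I32 * I21 * I32) + I32 ^ 2 * I21 = -I21) :
    let I31 := s • (I21 * I32) - s⁻¹ • (I32 * I21)
    s • (I21 * I32) - s⁻¹ • (I32 * I21) = I31 ∧
    s • (I32 * I31) - s⁻¹ • (I31 * I32) = I21 ∧
    s • (I31 * I21) - s⁻¹ • (I21 * I31) = I32 :=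
  stmt_0_general q s hq hs I21 I32 r1 r2
end

section
/- Conversely, let q be a nonzero complex number with a fixed square root q^{1/2}, and let A be a complex associative unital algebra with elements I21, I32, I31 satisfying [I21,I32]_q = I31, [I32,I31]_q = I21, [I31,I21]_q = I32, where [A,B]_q = q^{1/2}AB − q^{-1/2}BA. Then I21 and I32 satisfy the two trilinear relations I21²I32 − (q+q⁻¹)I21I32I21 + I32I21² = −I32 and I21I32² − (q+q⁻¹)I32I21I32 + I32²I21 = −I21. -/
/-!
Substituting `I31 = [I21, I32]_q` into the other two relations turns them into
identities in `I21, I32` alone; expanding the nested `q`-commutators, the coefficient of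
the middle monomial is `s² + s⁻² = q + q⁻¹`, and the two outer monomials carry `-1`.
-/

section

variable {K A : Type*} [Field K] [Ring A] [Algebra K A]

/-- `[x, y]_q = q^{1/2} x y - q^{-1/2} y x`, written in terms of `s = q^{1/2}`. -/
def qCommutator (s : K) (x y : A) : A := s • (x * y) - s⁻¹ • (y * x)

theorem qCommutator_qCommutator_left {s : K} (hs : s ≠ 0) (x y : A) :
    qCommutator s (qCommutator s x y) x =
      (s ^ 2 + (s ^ 2)⁻¹) • (x * y * x) - x ^ 2 * y - y * x ^ 2 := by
  simp only [qCommutator, sub_mul, mul_sub, smul_mul_assoc, mul_smul_comm, smul_sub, smul_smul,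
    mul_inv_cancel₀ hs, inv_mul_cancel₀ hs, one_smul, mul_assoc, pow_two]
  module

theorem qCommutator_right_qCommutator {s : K} (hs : s ≠ 0) (x y : A) :
    qCommutator s y (qCommutator s x y) =
      (s ^ 2 + (s ^ 2)⁻¹) • (y * x * y) - x * y ^ 2 - y ^ 2 * x := by
  simp only [qCommutator, sub_mul, mul_sub, smul_mul_assoc, mul_smul_comm, smul_sub, smul_smul,
    mul_inv_cancel₀ hs, inv_mul_cancel₀ hs, one_smul, mul_assoc, pow_two]
  module

end

/-- Conversely, if `I21, I32, I31` satisfy the three q-commutation relations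
`[I21,I32]_q = I31`, `[I32,I31]_q = I21`, `[I31,I21]_q = I32` (with `[X,Y]_q =
q^{1/2} X Y - q^{-1/2} Y X`, `s = q^{1/2}`), then `I21`, `I32` satisfy the two defining
trilinear relations of `U'_q(so_3)`. -/
theorem stmt_1 (q s : ℂ) (hq : q ≠ 0) (hs : s ^ 2 = q)
    {A : Type*} [Ring A] [Algebra ℂ A] (I21 I32 I31 : A)
    (r1 : s • (I21 * I32) - s⁻¹ • (I32 * I21) = I31)
    (r2 : s • (I32 * I31) - s⁻¹ • (I31 * I32) = I21)
    (r3 : s • (I31 * I21) - s⁻¹ • (I21 * I31) = I32) :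
    I21 ^ 2 * I32 - (q + q⁻¹) • (I21 * I32 * I21) + I32 * I21 ^ 2 = -I32 ∧
    I21 * I32 ^ 2 - (q + q⁻¹) • (I32 * I21 * I32) + I32 ^ 2 * I21 = -I21 := by
  subst hs
  have hs0 : s ≠ 0 := by rintro rfl; simp at hq
  change qCommutator s I21 I32 = I31 at r1
  change qCommutator s I32 I31 = I21 at r2
  change qCommutator s I31 I21 = I32 at r3
  rw [← r1, qCommutator_right_qCommutator hs0] at r2
  rw [← r1, qCommutator_qCommutator_left hs0] at r3
  constructor
  · convert congrArg Neg.neg r3 using 1; abel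
  · convert congrArg Neg.neg r2 using 1; abel
end

section
/- Fix an integer or half-integer l ≥ 0 and q ∈ ℂ not a root of unity (q ≠ 0, and q^{1/2} fixed). On the (2l+1)-dimensional complex vector space with basis |l,m⟩, m = −l, −l+1, …, l, define operators A and B by A|l,m⟩ = i[m]_q|l,m⟩ and B|l,m⟩ = (1/(q^m + q^{-m}))([l−m]_q|l,m+1⟩ − [l+m]_q|l,m−1⟩) (with |l,±(l+1)⟩ = 0). Then A and B satisfy the defining relations of U'_q(so_3): A²B − (q+q⁻¹)ABA + BA² = −B and AB² − (q+q⁻¹)BAB + B²A = −A. -/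
set_option maxHeartbeats 1600000 in
theorem S4_keyDiagAtom (q X w : ℂ) (hq : q ≠ 0) (hX : X ≠ 0) (hw : w ≠ 0)
    (h1 : q^2 - 1 ≠ 0) (h2 : X^2 + 1 ≠ 0)
    (h3 : X^2*q^2 + 1 ≠ 0) (h4 : X^2 + q^2 ≠ 0) :
    (-(((X*w*q - X⁻¹*w⁻¹*q⁻¹)/(q-q⁻¹))/(X*q + X⁻¹*q⁻¹))) *
      (((X⁻¹*w - X*w⁻¹)/(q-q⁻¹))/(X + X⁻¹)) *
      (2*(Complex.I * ((X - X⁻¹)/(q-q⁻¹))) - (q+q⁻¹)*(Complex.I * ((X*q - X⁻¹*q⁻¹)/(q-q⁻¹))))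
    + (((X⁻¹*w*q - X*w⁻¹*q⁻¹)/(q-q⁻¹))/(X*q⁻¹ + X⁻¹*q)) *
      (-(((X*w - X⁻¹*w⁻¹)/(q-q⁻¹))/(X + X⁻¹))) *
      (2*(Complex.I * ((X - X⁻¹)/(q-q⁻¹))) - (q+q⁻¹)*(Complex.I * ((X*q⁻¹ - X⁻¹*q)/(q-q⁻¹))))
    = -(Complex.I * ((X - X⁻¹)/(q-q⁻¹))) := by
  have hQ : q - q⁻¹ ≠ 0 := by
    intro h; apply h1
    have h' : (q - q⁻¹) * q = (q^2 - 1) := by field_simp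
    rw [← h', h, zero_mul]
  have hD0 : X + X⁻¹ ≠ 0 := by
    intro h; apply h2
    have h' : (X + X⁻¹) * X = (X^2 + 1) := by field_simp
    rw [← h', h, zero_mul]
  have hDp : X*q + X⁻¹*q⁻¹ ≠ 0 := by
    intro h; apply h3
    have h' : (X*q + X⁻¹*q⁻¹) * (X*q) = X^2*q^2 + 1 := by field_simp
    rw [← h', h, zero_mul]
  have hDm : X*q⁻¹ + X⁻¹*q ≠ 0 := by
    intro h; apply h4
    have h' : (X*q⁻¹ + X⁻¹*q) * (X*q) = X^2 + q^2 := by field_simp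
    rw [← h', h, zero_mul]
  have e1 : -(((X*w*q - X⁻¹*w⁻¹*q⁻¹)/(q-q⁻¹))/(X*q + X⁻¹*q⁻¹))
      = (-(q*(X^2*w^2*q^2-1))) / (w*((q^2-1)*(X^2*q^2+1))) := by
    rw [div_div, ← neg_div, div_eq_div_iff (mul_ne_zero hQ hDp) (mul_ne_zero hw (mul_ne_zero h1 h3))]
    field_simp
  have e2 : ((X⁻¹*w - X*w⁻¹)/(q-q⁻¹))/(X + X⁻¹)
      = (q*(w^2 - X^2)) / (w*((q^2-1)*(X^2+1))) := by
    rw [div_div, div_eq_div_iff (mul_ne_zero hQ hD0) (mul_ne_zero hw (mul_ne_zero h1 h2))]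
    field_simp
  have e3 : (2*(Complex.I * ((X - X⁻¹)/(q-q⁻¹))) - (q+q⁻¹)*(Complex.I * ((X*q - X⁻¹*q⁻¹)/(q-q⁻¹))))
      = (Complex.I*(2*q^2*(X^2-1) - (q^2+1)*(X^2*q^2-1))) / (X*(q*(q^2-1))) := by
    simp only [← mul_div_assoc, div_sub_div_same]
    rw [div_eq_div_iff hQ (mul_ne_zero hX (mul_ne_zero hq h1))]
    field_simp
  have e4 : ((X⁻¹*w*q - X*w⁻¹*q⁻¹)/(q-q⁻¹))/(X*q⁻¹ + X⁻¹*q)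
      = (q*(w^2*q^2 - X^2)) / (w*((q^2-1)*(X^2+q^2))) := by
    rw [div_div, div_eq_div_iff (mul_ne_zero hQ hDm) (mul_ne_zero hw (mul_ne_zero h1 h4))]
    field_simp
  have e5 : -(((X*w - X⁻¹*w⁻¹)/(q-q⁻¹))/(X + X⁻¹))
      = (-(q*(X^2*w^2-1))) / (w*((q^2-1)*(X^2+1))) := by
    rw [div_div, ← neg_div, div_eq_div_iff (mul_ne_zero hQ hD0) (mul_ne_zero hw (mul_ne_zero h1 h2))]
    field_simp
  have e6 : (2*(Complex.I * ((X - X⁻¹)/(q-q⁻¹))) - (q+q⁻¹)*(Complex.I * ((X*q⁻¹ - X⁻¹*q)/(q-q⁻¹))))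
      = (Complex.I*(2*q^2*(X^2-1) - (q^2+1)*(X^2-q^2))) / (X*(q*(q^2-1))) := by
    simp only [← mul_div_assoc, div_sub_div_same]
    rw [div_eq_div_iff hQ (mul_ne_zero hX (mul_ne_zero hq h1))]
    field_simp
  have e7 : -(Complex.I * ((X - X⁻¹)/(q-q⁻¹)))
      = (-(Complex.I*(q*(X^2-1)))) / (X*(q^2-1)) := by
    rw [← mul_div_assoc, ← neg_div, div_eq_div_iff hQ (mul_ne_zero hX h1)]
    field_simp
  rw [e3] -- e3 must be rewritten before e1 etc? order: just rw all
  rw [e1, e2, e4, e5, e6, e7]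
  rw [div_mul_div_comm, div_mul_div_comm, div_mul_div_comm, div_mul_div_comm]
  rw [div_add_div _ _
      (mul_ne_zero (mul_ne_zero (mul_ne_zero hw (mul_ne_zero h1 h3)) (mul_ne_zero hw (mul_ne_zero h1 h2))) (mul_ne_zero hX (mul_ne_zero hq h1)))
      (mul_ne_zero (mul_ne_zero (mul_ne_zero hw (mul_ne_zero h1 h4)) (mul_ne_zero hw (mul_ne_zero h1 h2))) (mul_ne_zero hX (mul_ne_zero hq h1)))]
  rw [div_eq_div_iff (mul_ne_zero
      (mul_ne_zero (mul_ne_zero (mul_ne_zero hw (mul_ne_zero h1 h3)) (mul_ne_zero hw (mul_ne_zero h1 h2))) (mul_ne_zero hX (mul_ne_zero hq h1)))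
      (mul_ne_zero (mul_ne_zero (mul_ne_zero hw (mul_ne_zero h1 h4)) (mul_ne_zero hw (mul_ne_zero h1 h2))) (mul_ne_zero hX (mul_ne_zero hq h1))))
      (mul_ne_zero hX h1)]
  ring

lemma S4_relAtom (q X : ℂ) (hq : q ≠ 0) (hX : X ≠ 0) (h1 : q^2 - 1 ≠ 0) :
    ((X*q - X⁻¹*q⁻¹)/(q-q⁻¹)) * ((X*q - X⁻¹*q⁻¹)/(q-q⁻¹))
      - (q+q⁻¹) * (((X*q - X⁻¹*q⁻¹)/(q-q⁻¹)) * ((X - X⁻¹)/(q-q⁻¹)))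
      + ((X - X⁻¹)/(q-q⁻¹)) * ((X - X⁻¹)/(q-q⁻¹)) = 1 := by
  have hQ : q - q⁻¹ ≠ 0 := by
    intro h; apply h1
    have h' : (q - q⁻¹) * q = (q^2 - 1) := by field_simp
    rw [← h', h, zero_mul]
  have hD : X*(q^2-1) ≠ 0 := mul_ne_zero hX h1
  have ea : (X - X⁻¹)/(q-q⁻¹) = (q*(X^2-1)) / (X*(q^2-1)) := by
    rw [div_eq_div_iff hQ hD]; field_simp
  have eb : (X*q - X⁻¹*q⁻¹)/(q-q⁻¹) = (X^2*q^2-1) / (X*(q^2-1)) := by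
    rw [div_eq_div_iff hQ hD]; field_simp
  have eQ : q + q⁻¹ = (q^2+1)/q := by field_simp
  rw [ea, eb, eQ]
  simp only [div_mul_div_comm]
  rw [div_sub_div _ _ (mul_ne_zero hD hD) (mul_ne_zero hq (mul_ne_zero hD hD)),
    div_add_div _ _ (mul_ne_zero (mul_ne_zero hD hD) (mul_ne_zero hq (mul_ne_zero hD hD))) (mul_ne_zero hD hD),
    div_eq_one_iff_eq (mul_ne_zero (mul_ne_zero (mul_ne_zero hD hD) (mul_ne_zero hq (mul_ne_zero hD hD))) (mul_ne_zero hD hD))]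
  ring

lemma S4_sumAtom (q X : ℂ) (hq : q ≠ 0) (hX : X ≠ 0) (h1 : q^2 - 1 ≠ 0) :
    ((X - X⁻¹)/(q-q⁻¹)) + ((X*q*q - X⁻¹*q⁻¹*q⁻¹)/(q-q⁻¹))
      - (q+q⁻¹) * ((X*q - X⁻¹*q⁻¹)/(q-q⁻¹)) = 0 := by
  have hQ : q - q⁻¹ ≠ 0 := by
    intro h; apply h1
    have h' : (q - q⁻¹) * q = (q^2 - 1) := by field_simp
    rw [← h', h, zero_mul]
  have hD : X*(q^2-1) ≠ 0 := mul_ne_zero hX h1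
  have hD2 : X*(q*(q^2-1)) ≠ 0 := mul_ne_zero hX (mul_ne_zero hq h1)
  have ea : (X - X⁻¹)/(q-q⁻¹) = (q*(X^2-1)) / (X*(q^2-1)) := by
    rw [div_eq_div_iff hQ hD]; field_simp
  have eb : (X*q - X⁻¹*q⁻¹)/(q-q⁻¹) = (X^2*q^2-1) / (X*(q^2-1)) := by
    rw [div_eq_div_iff hQ hD]; field_simp
  have ec : (X*q*q - X⁻¹*q⁻¹*q⁻¹)/(q-q⁻¹) = (X^2*q^4-1) / (X*(q*(q^2-1))) := by
    rw [div_eq_div_iff hQ hD2]; field_simp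
  have eQ : q + q⁻¹ = (q^2+1)/q := by field_simp
  rw [ea, eb, ec, eQ]
  simp only [div_mul_div_comm]
  rw [div_add_div _ _ hD hD2,
    div_sub_div _ _ (mul_ne_zero hD hD2) (mul_ne_zero hq hD),
    div_eq_zero_iff]
  left; ring

lemma S4_qpow_ne_neg_one (q : ℂ) (hq : q ≠ 0) (hroot : ∀ k : ℕ, 0 < k → q ^ k ≠ 1) (e : ℤ) :
    q ^ e ≠ -1 := by
  intro h
  by_cases he : e = 0
  · rw [he] at h; norm_num at h
  · have h2 : q ^ (e*2) = 1 := by rw [zpow_mul, h]; norm_num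
    have hn : 0 < (e*2).natAbs := by omega
    have h3 : q ^ ((e*2).natAbs : ℤ) = 1 := by
      rcases le_or_gt 0 (e*2) with h'|h'
      · rwa [Int.natAbs_of_nonneg h']
      · rw [Int.ofNat_natAbs_of_nonpos (le_of_lt h'), zpow_neg, h2, inv_one]
    exact hroot _ hn (by rwa [← zpow_natCast])

lemma S4_pow_sq (t : ℂ) (E : ℤ) : (t^E)^(2:ℕ) = (t^(2:ℕ))^E := by
  rw [← zpow_natCast t, ← zpow_natCast (t^E), ← zpow_mul, ← zpow_mul, mul_comm]

lemma S4_facts (q t : ℂ) (hq : q ≠ 0) (ht : t ≠ 0) (ht2 : t^2 = q)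
    (hroot : ∀ k : ℕ, 0 < k → q ^ k ≠ 1) (E : ℤ) :
    (t^E)^2 + 1 ≠ 0 ∧ (t^E)^2 * q^2 + 1 ≠ 0 ∧ (t^E)^2 + q^2 ≠ 0 := by
  have hqE : q ^ E = (t^E)^2 := by rw [← ht2, ← S4_pow_sq]
  refine ⟨fun h => S4_qpow_ne_neg_one q hq hroot E ?_,
          fun h => S4_qpow_ne_neg_one q hq hroot (E+2) ?_,
          fun h => S4_qpow_ne_neg_one q hq hroot (E-2) ?_⟩
  · rw [hqE]; linear_combination h
  · rw [zpow_add₀ hq, hqE, show (q:ℂ) ^ (2:ℤ) = q^(2:ℕ) from zpow_ofNat q 2]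
    linear_combination h
  · rw [zpow_sub₀ hq, hqE, show (q:ℂ) ^ (2:ℤ) = q^(2:ℕ) from zpow_ofNat q 2,
      div_eq_iff (pow_ne_zero 2 hq)]
    linear_combination h

lemma S4_sum_two (N : ℕ) (i : Fin (N+1)) (F : ℤ → ℂ)
    (hsupp : ∀ x : ℤ, x ≠ (i:ℤ)+1 → x ≠ (i:ℤ)-1 → F x = 0)
    (hlo : F (-1) = 0) (hhi : F ((N:ℤ)+1) = 0) :
    ∑ k : Fin (N+1), F (k:ℤ) = F ((i:ℤ)+1) + F ((i:ℤ)-1) := by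
  have hi : (i:ℕ) < N+1 := i.isLt
  by_cases hiN : (i:ℕ) = N
  · by_cases hi0 : (i:ℕ) = 0
    · -- N = 0
      have hN0 : N = 0 := by omega
      subst hN0
      rw [Fin.sum_univ_one]
      have e0 : ((0 : Fin 1) : ℤ) = 0 := rfl
      rw [e0, hsupp 0 (by omega) (by omega),
        show ((i:ℤ))+1 = ((0:ℕ):ℤ)+1 by omega, hhi,
        show ((i:ℤ))-1 = -1 by omega, hlo]
      ring
    · -- i = N > 0
      have hk : N-1 < N+1 := by omega
      have e1 : ((⟨N-1, hk⟩ : Fin (N+1)) : ℕ) = N-1 := rfl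
      rw [Finset.sum_eq_single_of_mem (⟨N-1, hk⟩ : Fin (N+1)) (Finset.mem_univ _)
        (fun b _ hb => hsupp _ (by have := b.isLt; omega)
          (by have := b.isLt
              have hbv : (b:ℕ) ≠ N-1 := fun h => hb (Fin.ext (h.trans e1.symm))
              omega))]
      rw [show ((i:ℤ))+1 = (N:ℤ)+1 by omega, hhi,
        show ((i:ℤ))-1 = (((⟨N-1, hk⟩ : Fin (N+1)) : ℕ):ℤ) by rw [e1]; omega]
      ring
  · by_cases hi0 : (i:ℕ) = 0
    · -- i = 0 < N
      have hk : 1 < N+1 := by omega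
      have e1 : ((⟨1, hk⟩ : Fin (N+1)) : ℕ) = 1 := rfl
      rw [Finset.sum_eq_single_of_mem (⟨1, hk⟩ : Fin (N+1)) (Finset.mem_univ _)
        (fun b _ hb => hsupp _
          (by have := b.isLt
              have hbv : (b:ℕ) ≠ 1 := fun h => hb (Fin.ext (h.trans e1.symm))
              omega)
          (by have := b.isLt; omega))]
      rw [show ((i:ℤ))-1 = -1 by omega, hlo,
        show ((i:ℤ))+1 = (((⟨1, hk⟩ : Fin (N+1)) : ℕ):ℤ) by rw [e1]; omega]
      ring
    · -- interior
      have hk1 : (i:ℕ)+1 < N+1 := by omega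
      have hk2 : (i:ℕ)-1 < N+1 := by omega
      have e1 : ((⟨(i:ℕ)+1, hk1⟩ : Fin (N+1)) : ℕ) = (i:ℕ)+1 := rfl
      have e2 : ((⟨(i:ℕ)-1, hk2⟩ : Fin (N+1)) : ℕ) = (i:ℕ)-1 := rfl
      rw [← Finset.add_sum_erase _ _ (Finset.mem_univ (⟨(i:ℕ)+1, hk1⟩ : Fin (N+1)))]
      rw [Finset.sum_eq_single_of_mem (⟨(i:ℕ)-1, hk2⟩ : Fin (N+1))
        (Finset.mem_erase.mpr ⟨by
          intro h
          have := congrArg Fin.val h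
          rw [e1, e2] at this
          omega, Finset.mem_univ _⟩)
        (fun b hb hb2 => by
          have := b.isLt
          have h1 : (b:ℕ) ≠ (i:ℕ)+1 := fun h => (Finset.mem_erase.mp hb).1 (Fin.ext (h.trans e1.symm))
          have h2 : (b:ℕ) ≠ (i:ℕ)-1 := fun h => hb2 (Fin.ext (h.trans e2.symm))
          exact hsupp _ (by omega) (by omega))]
      rw [show (((⟨(i:ℕ)+1, hk1⟩ : Fin (N+1))):ℤ) = (i:ℤ)+1 by rw [show (((⟨(i:ℕ)+1, hk1⟩ : Fin (N+1))):ℤ) = (((i:ℕ)+1 : ℕ):ℤ) from rfl]; omega,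
        show (((⟨(i:ℕ)-1, hk2⟩ : Fin (N+1))):ℤ) = (i:ℤ)-1 by rw [show (((⟨(i:ℕ)-1, hk2⟩ : Fin (N+1))):ℤ) = (((i:ℕ)-1 : ℕ):ℤ) from rfl]; omega]


set_option maxHeartbeats 4000000 in
/-- The classical-type representation `T_l` of `U'_q(so_3)`.
Here `l = N/2` (integer or half-integer), the space has basis indexed by
`j : Fin (N+1)` corresponding to `m = j - l` (so `q^m = t^(2j - N)`, `l+m = j`,
`l-m = N-j`), `t = q^{1/2}`. The operators
`A|l,m⟩ = i[m]_q |l,m⟩` and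
`B|l,m⟩ = (q^m + q^{-m})⁻¹ ([l-m]_q |l,m+1⟩ - [l+m]_q |l,m-1⟩)`
satisfy the defining relations of `U'_q(so_3)`. -/
theorem stmt_4 (q t : ℂ) (hq : q ≠ 0) (ht : t ≠ 0) (ht2 : t ^ 2 = q)
    (hroot : ∀ k : ℕ, 0 < k → q ^ k ≠ 1) (N : ℕ)
    (A B : Matrix (Fin (N + 1)) (Fin (N + 1)) ℂ)
    (hA : ∀ i j : Fin (N + 1), A i j =
      if i = j then
        Complex.I * ((t ^ (2 * (j : ℤ) - N) - t ^ ((N : ℤ) - 2 * j)) / (q - q⁻¹))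
      else 0)
    (hB : ∀ i j : Fin (N + 1), B i j =
      if (i : ℤ) = (j : ℤ) + 1 then
        ((t ^ (2 * ((N : ℤ) - j)) - t ^ (-(2 * ((N : ℤ) - j)))) / (q - q⁻¹)) /
          (t ^ (2 * (j : ℤ) - N) + t ^ ((N : ℤ) - 2 * j))
      else if (i : ℤ) = (j : ℤ) - 1 then
        -(((t ^ (2 * (j : ℤ)) - t ^ (-(2 * (j : ℤ)))) / (q - q⁻¹)) /
          (t ^ (2 * (j : ℤ) - N) + t ^ ((N : ℤ) - 2 * j)))
      else 0) :
    A * A * B - (q + q⁻¹) • (A * B * A) + B * A * A = -B ∧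
    A * B * B - (q + q⁻¹) • (B * A * B) + B * B * A = -A := by
  have hQ1 : q ^ 2 - 1 ≠ 0 := sub_ne_zero_of_ne (hroot 2 (by norm_num))
  have hsplit : ∀ a b : ℤ, t ^ (a + b) = t ^ a * t ^ b := fun a b => zpow_add₀ ht a b
  have hneg : ∀ a : ℤ, t ^ (-a) = (t ^ a)⁻¹ := fun a => zpow_neg t a
  have h2q : t ^ (2:ℤ) = q := by
    rw [show (2:ℤ) = ((2:ℕ):ℤ) from rfl, zpow_natCast, ht2]
  have z13 : ∀ c : ℤ, t ^ ((N:ℤ) - 2*c) = (t ^ (2*c - (N:ℤ)))⁻¹ := fun c => by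
    rw [show (N:ℤ) - 2*c = -(2*c - (N:ℤ)) from by ring, hneg]
  have z1 : ∀ c : ℤ, t ^ (2*(c+1) - (N:ℤ)) = t ^ (2*c - (N:ℤ)) * q := fun c => by
    rw [show 2*(c+1) - (N:ℤ) = (2*c - (N:ℤ)) + 2 from by ring]
    simp only [hsplit, hneg, h2q]
  have z2 : ∀ c : ℤ, t ^ ((N:ℤ) - 2*(c+1)) = (t ^ (2*c - (N:ℤ)))⁻¹ * q⁻¹ := fun c => by
    rw [show (N:ℤ) - 2*(c+1) = -(2*c - (N:ℤ)) + -2 from by ring]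
    simp only [hsplit, hneg, h2q]
  have z3 : ∀ c : ℤ, t ^ (2*(c+1)) = t ^ (2*c - (N:ℤ)) * t ^ ((N:ℤ)) * q := fun c => by
    rw [show 2*(c+1) = ((2*c - (N:ℤ)) + (N:ℤ)) + 2 from by ring]
    simp only [hsplit, hneg, h2q]
  have z4 : ∀ c : ℤ, t ^ (-(2*(c+1))) = (t ^ (2*c - (N:ℤ)))⁻¹ * (t ^ ((N:ℤ)))⁻¹ * q⁻¹ := fun c => by
    rw [show -(2*(c+1)) = ((-(2*c - (N:ℤ))) + (-(N:ℤ))) + -2 from by ring]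
    simp only [hsplit, hneg, h2q]
  have z5 : ∀ c : ℤ, t ^ (2*(c-1) - (N:ℤ)) = t ^ (2*c - (N:ℤ)) * q⁻¹ := fun c => by
    rw [show 2*(c-1) - (N:ℤ) = (2*c - (N:ℤ)) + -2 from by ring]
    simp only [hsplit, hneg, h2q]
  have z6 : ∀ c : ℤ, t ^ ((N:ℤ) - 2*(c-1)) = (t ^ (2*c - (N:ℤ)))⁻¹ * q := fun c => by
    rw [show (N:ℤ) - 2*(c-1) = -(2*c - (N:ℤ)) + 2 from by ring]
    simp only [hsplit, hneg, h2q]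
  have z7 : ∀ c : ℤ, t ^ (2*((N:ℤ) - (c-1))) = (t ^ (2*c - (N:ℤ)))⁻¹ * t ^ ((N:ℤ)) * q := fun c => by
    rw [show 2*((N:ℤ) - (c-1)) = ((-(2*c - (N:ℤ))) + (N:ℤ)) + 2 from by ring]
    simp only [hsplit, hneg, h2q]
  have z8 : ∀ c : ℤ, t ^ (-(2*((N:ℤ) - (c-1)))) = t ^ (2*c - (N:ℤ)) * (t ^ ((N:ℤ)))⁻¹ * q⁻¹ := fun c => by
    rw [show -(2*((N:ℤ) - (c-1))) = ((2*c - (N:ℤ)) + (-(N:ℤ))) + -2 from by ring]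
    simp only [hsplit, hneg, h2q]
  have z9 : ∀ c : ℤ, t ^ (2*((N:ℤ) - c)) = (t ^ (2*c - (N:ℤ)))⁻¹ * t ^ ((N:ℤ)) := fun c => by
    rw [show 2*((N:ℤ) - c) = (-(2*c - (N:ℤ))) + (N:ℤ) from by ring]
    simp only [hsplit, hneg, h2q]
  have z10 : ∀ c : ℤ, t ^ (-(2*((N:ℤ) - c))) = t ^ (2*c - (N:ℤ)) * (t ^ ((N:ℤ)))⁻¹ := fun c => by
    rw [show -(2*((N:ℤ) - c)) = (2*c - (N:ℤ)) + (-(N:ℤ)) from by ring]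
    simp only [hsplit, hneg, h2q]
  have z11 : ∀ c : ℤ, t ^ (2*c) = t ^ (2*c - (N:ℤ)) * t ^ ((N:ℤ)) := fun c => by
    conv_lhs => rw [show 2*c = (2*c - (N:ℤ)) + (N:ℤ) from by ring]
    simp only [hsplit, hneg, h2q]
  have z12 : ∀ c : ℤ, t ^ (-(2*c)) = (t ^ (2*c - (N:ℤ)))⁻¹ * (t ^ ((N:ℤ)))⁻¹ := fun c => by
    conv_lhs => rw [show -(2*c) = (-(2*c - (N:ℤ))) + (-(N:ℤ)) from by ring]
    simp only [hsplit, hneg, h2q]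
  have z14 : ∀ c : ℤ, t ^ (2*(c+2) - (N:ℤ)) = t ^ (2*c - (N:ℤ)) * q * q := fun c => by
    rw [show 2*(c+2) - (N:ℤ) = ((2*c - (N:ℤ)) + 2) + 2 from by ring]
    simp only [hsplit, hneg, h2q]
  have z15 : ∀ c : ℤ, t ^ ((N:ℤ) - 2*(c+2)) = (t ^ (2*c - (N:ℤ)))⁻¹ * q⁻¹ * q⁻¹ := fun c => by
    rw [show (N:ℤ) - 2*(c+2) = ((-(2*c - (N:ℤ))) + -2) + -2 from by ring]
    simp only [hsplit, hneg, h2q]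
  obtain ⟨dd, hdd⟩ : ∃ d : Fin (N+1) → ℂ, d = fun k : Fin (N+1) =>
      Complex.I * ((t ^ (2 * (k : ℤ) - N) - t ^ ((N : ℤ) - 2 * k)) / (q - q⁻¹)) := ⟨_, rfl⟩
  have hAd : A = Matrix.diagonal dd := by
    ext a b
    rw [hA a b]
    by_cases h : a = b
    · subst h
      rw [if_pos rfl, Matrix.diagonal_apply_eq, hdd]
    · rw [if_neg h, Matrix.diagonal_apply_ne _ h]
  constructor
  · ext a b
    rw [hAd]
    simp only [Matrix.sub_apply, Matrix.add_apply, Matrix.smul_apply, Matrix.neg_apply,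
      smul_eq_mul, Matrix.diagonal_mul_diagonal, Matrix.diagonal_mul, Matrix.mul_diagonal, hdd]
    by_cases h1 : (a:ℤ) = (b:ℤ) + 1
    · rw [h1, z1 (b:ℤ), z2 (b:ℤ), z13 (b:ℤ)]
      linear_combination (Complex.I^2 * (B a b)) *
          S4_relAtom q (t ^ (2*(b:ℤ) - (N:ℤ))) hq (zpow_ne_zero _ ht) hQ1
        + (B a b) * Complex.I_sq
    · by_cases h2 : (a:ℤ) = (b:ℤ) - 1
      · rw [show (b:ℤ) = (a:ℤ) + 1 from by omega, z1 (a:ℤ), z2 (a:ℤ), z13 (a:ℤ)]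
        linear_combination (Complex.I^2 * (B a b)) *
            S4_relAtom q (t ^ (2*(a:ℤ) - (N:ℤ))) hq (zpow_ne_zero _ ht) hQ1
          + (B a b) * Complex.I_sq
      · rw [hB a b, if_neg h1, if_neg h2]
        ring
  · ext a b
    have ha' : (a:ℕ) < N+1 := a.isLt
    have hb' : (b:ℕ) < N+1 := b.isLt
    obtain ⟨F, hF⟩ : ∃ F : ℤ → ℂ, F = fun x : ℤ =>
      (if (a:ℤ) = x + 1 then
        ((t ^ (2*((N:ℤ) - x)) - t ^ (-(2*((N:ℤ) - x)))) / (q - q⁻¹)) /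
          (t ^ (2*x - (N:ℤ)) + t ^ ((N:ℤ) - 2*x))
       else if (a:ℤ) = x - 1 then
        -(((t ^ (2*x) - t ^ (-(2*x))) / (q - q⁻¹)) /
          (t ^ (2*x - (N:ℤ)) + t ^ ((N:ℤ) - 2*x)))
       else 0) *
      (if x = (b:ℤ) + 1 then
        ((t ^ (2*((N:ℤ) - (b:ℤ))) - t ^ (-(2*((N:ℤ) - (b:ℤ))))) / (q - q⁻¹)) /
          (t ^ (2*(b:ℤ) - (N:ℤ)) + t ^ ((N:ℤ) - 2*(b:ℤ)))
       else if x = (b:ℤ) - 1 then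
        -(((t ^ (2*(b:ℤ)) - t ^ (-(2*(b:ℤ)))) / (q - q⁻¹)) /
          (t ^ (2*(b:ℤ) - (N:ℤ)) + t ^ ((N:ℤ) - 2*(b:ℤ))))
       else 0) *
      (dd a + dd b - (q+q⁻¹) * (Complex.I * ((t ^ (2*x - (N:ℤ)) - t ^ ((N:ℤ) - 2*x)) / (q - q⁻¹)))) := ⟨_, rfl⟩
    have E1 : (A*B*B) a b = ∑ k : Fin (N+1), (dd a * B a k) * B k b := by
      rw [Matrix.mul_apply]
      exact Finset.sum_congr rfl fun k _ => by rw [hAd, Matrix.diagonal_mul]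
    have E2 : (B*A*B) a b = ∑ k : Fin (N+1), (B a k * dd k) * B k b := by
      rw [Matrix.mul_apply]
      exact Finset.sum_congr rfl fun k _ => by rw [hAd, Matrix.mul_diagonal]
    have E3 : (B*B*A) a b = ∑ k : Fin (N+1), (B a k * B k b) * dd b := by
      rw [hAd, Matrix.mul_diagonal, Matrix.mul_apply, Finset.sum_mul]
    have hexp : (A * B * B - (q + q⁻¹) • (B * A * B) + B * B * A) a b
        = ∑ k : Fin (N+1), F (k:ℤ) := by
      rw [Matrix.add_apply, Matrix.sub_apply, Matrix.smul_apply, smul_eq_mul, E1, E2, E3,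
        Finset.mul_sum, ← Finset.sum_sub_distrib, ← Finset.sum_add_distrib]
      refine Finset.sum_congr rfl fun k _ => ?_
      simp only [hF, hdd, hB a k, hB k b]
      ring
    have hsupp : ∀ x : ℤ, x ≠ (a:ℤ)+1 → x ≠ (a:ℤ)-1 → F x = 0 := by
      intro x hx1 hx2
      simp only [hF]
      rw [if_neg (show ¬((a:ℤ) = x + 1) from by omega),
        if_neg (show ¬((a:ℤ) = x - 1) from by omega), zero_mul, zero_mul]
    have hlo : F (-1) = 0 := by
      simp only [hF]
      by_cases hb0 : (b:ℤ) = 0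
      · rw [if_neg (show ¬((-1:ℤ) = (b:ℤ) + 1) from by omega),
          if_pos (show (-1:ℤ) = (b:ℤ) - 1 from by omega), hb0]
        simp
      · rw [if_neg (show ¬((-1:ℤ) = (b:ℤ) + 1) from by omega),
          if_neg (show ¬((-1:ℤ) = (b:ℤ) - 1) from by omega)]
        simp
    have hhi : F ((N:ℤ)+1) = 0 := by
      simp only [hF]
      by_cases hbN : (b:ℤ) = (N:ℤ)
      · rw [if_pos (show ((N:ℤ)+1 = (b:ℤ) + 1) from by omega), hbN]
        simp
      · rw [if_neg (show ¬((N:ℤ)+1 = (b:ℤ) + 1) from by omega),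
          if_neg (show ¬((N:ℤ)+1 = (b:ℤ) - 1) from by omega)]
        simp
    rw [hexp, S4_sum_two N a F hsupp hlo hhi, hAd, Matrix.neg_apply]
    by_cases hab : a = b
    · subst hab
      rw [Matrix.diagonal_apply_eq]
      simp only [hF, hdd]
      rw [if_neg (show ¬((a:ℤ) = ((a:ℤ)+1) + 1) from by omega),
        if_pos (show (a:ℤ) = ((a:ℤ)+1) - 1 from by omega),
        if_pos (show (a:ℤ) = ((a:ℤ)-1) + 1 from by omega),
        if_neg (show ¬(((a:ℤ)-1) = (a:ℤ) + 1) from by omega)]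
      simp only [if_true]
      rw [z3 (a:ℤ), z4 (a:ℤ), z1 (a:ℤ), z2 (a:ℤ), z9 (a:ℤ), z10 (a:ℤ), z5 (a:ℤ), z6 (a:ℤ),
        z7 (a:ℤ), z8 (a:ℤ), z11 (a:ℤ), z12 (a:ℤ), z13 (a:ℤ)]
      have fx := S4_facts q t hq ht ht2 hroot (2*(a:ℤ) - (N:ℤ))
      linear_combination S4_keyDiagAtom q (t ^ (2*(a:ℤ) - (N:ℤ))) (t ^ ((N:ℤ))) hq
        (zpow_ne_zero _ ht) (zpow_ne_zero _ ht) hQ1 fx.1 fx.2.1 fx.2.2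
    · rw [Matrix.diagonal_apply_ne _ hab]
      have hab' : (a:ℤ) ≠ (b:ℤ) := fun h => hab (Fin.ext (by exact_mod_cast h))
      by_cases h2 : (b:ℤ) = (a:ℤ) + 2
      · simp only [hF, hdd]
        rw [if_neg (show ¬((a:ℤ) = ((a:ℤ)+1) + 1) from by omega),
          if_pos (show (a:ℤ) = ((a:ℤ)+1) - 1 from by omega),
          if_neg (show ¬(((a:ℤ)+1) = (b:ℤ) + 1) from by omega),
          if_pos (show ((a:ℤ)+1) = (b:ℤ) - 1 from by omega),
          if_pos (show (a:ℤ) = ((a:ℤ)-1) + 1 from by omega),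
          if_neg (show ¬(((a:ℤ)-1) = (b:ℤ) + 1) from by omega),
          if_neg (show ¬(((a:ℤ)-1) = (b:ℤ) - 1) from by omega)]
        rw [mul_zero, zero_mul, add_zero, neg_zero]
        apply mul_eq_zero_of_right
        rw [h2, z14 (a:ℤ), z15 (a:ℤ), z1 (a:ℤ), z2 (a:ℤ), z13 (a:ℤ)]
        linear_combination Complex.I * S4_sumAtom q (t ^ (2*(a:ℤ) - (N:ℤ))) hq (zpow_ne_zero _ ht) hQ1
      · by_cases h3 : (a:ℤ) = (b:ℤ) + 2
        · simp only [hF, hdd]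
          rw [if_neg (show ¬(((a:ℤ)+1) = (b:ℤ) + 1) from by omega),
            if_neg (show ¬(((a:ℤ)+1) = (b:ℤ) - 1) from by omega),
            if_pos (show (a:ℤ) = ((a:ℤ)-1) + 1 from by omega),
            if_pos (show ((a:ℤ)-1) = (b:ℤ) + 1 from by omega)]
          rw [mul_zero, zero_mul, zero_add, neg_zero]
          apply mul_eq_zero_of_right
          rw [show (a:ℤ) - 1 = (b:ℤ) + 1 from by omega, h3,
            z14 (b:ℤ), z15 (b:ℤ), z1 (b:ℤ), z2 (b:ℤ), z13 (b:ℤ)]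
          linear_combination Complex.I * S4_sumAtom q (t ^ (2*(b:ℤ) - (N:ℤ))) hq (zpow_ne_zero _ ht) hQ1
        · simp only [hF]
          rw [if_neg (show ¬(((a:ℤ)+1) = (b:ℤ) + 1) from by omega),
            if_neg (show ¬(((a:ℤ)+1) = (b:ℤ) - 1) from by omega),
            if_neg (show ¬(((a:ℤ)-1) = (b:ℤ) + 1) from by omega),
            if_neg (show ¬(((a:ℤ)-1) = (b:ℤ) - 1) from by omega)]
          simp
end

section
/- For the nonclassical-type representation T_n^{ε₁,ε₂} of U'_q(so_3) on the n-dimensional space (formulas as above), the trace of T_n^{ε₁,ε₂}(I21) equals ε₁(q−q⁻¹)⁻¹ Σ_{k=1}^n (q^{k−1/2} + q^{−k+1/2}), which is nonzero for q real with q > 0, q ≠ 1; and the trace of T_n^{ε₁,ε₂}(I32) equals ε₂[n]_q/(q^{1/2} − q^{−1/2}), which is nonzero under the same hypothesis. -/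
private lemma aux_sub_inv_ne (x : ℝ) (hx : 0 < x) (h1 : x ≠ 1) : x - x⁻¹ ≠ 0 := by
  intro h
  have hx0 : x ≠ 0 := ne_of_gt hx
  have h2 : x * x = 1 := by
    field_simp at h
    nlinarith [h]
  have h3 : (x - 1) * (x + 1) = 0 := by nlinarith
  rcases mul_eq_zero.1 h3 with h4 | h4
  · exact h1 (by linarith)
  · linarith

/-- Traces of the operators of the nonclassical-type representation
`T_n^{ε₁,ε₂}` of `U'_q(so_3)` (conventions as in STATEMENT 5; `q` real with `q > 0`,
`q ≠ 1`, `t = q^{1/2} > 0` real):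
`Tr A = ε₁ (q-q⁻¹)⁻¹ Σ_{k=1}^n (q^{k-1/2} + q^{-k+1/2}) ≠ 0` and
`Tr B = ε₂ [n]_q/(q^{1/2} - q^{-1/2}) ≠ 0`. -/
theorem stmt_7 (q t : ℂ) (hq : q ≠ 0) (ht : t ≠ 0) (ht2 : t ^ 2 = q)
    (hqre : q.im = 0) (hqpos : 0 < q.re) (hq1 : q ≠ 1)
    (htre : t.im = 0) (htpos : 0 < t.re)
    (n : ℕ) (hn : 0 < n)
    (e1 e2 : ℂ) (he1 : e1 = 1 ∨ e1 = -1) (he2 : e2 = 1 ∨ e2 = -1)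
    (A B : Matrix (Fin n) (Fin n) ℂ)
    (hA : ∀ i j : Fin n, A i j =
      if i = j then
        e1 * ((t ^ (2 * (j : ℤ) + 1) + t ^ (-(2 * (j : ℤ) + 1))) / (q - q⁻¹))
      else 0)
    (hB : ∀ i j : Fin n, B i j =
      if (j : ℕ) = 0 then
        (if (i : ℕ) = 0 then
          e2 * ((q ^ (n : ℤ) - q ^ (-(n : ℤ))) / (q - q⁻¹)) / (t - t⁻¹)
        else if (i : ℕ) = 1 then
          Complex.I * ((q ^ ((n : ℤ) - 1) - q ^ (1 - (n : ℤ))) / (q - q⁻¹)) / (t - t⁻¹)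
        else 0)
      else
        (if (i : ℤ) = (j : ℤ) + 1 then
          Complex.I * ((q ^ ((n : ℤ) - (j : ℤ) - 1) - q ^ (-((n : ℤ) - (j : ℤ) - 1))) / (q - q⁻¹)) /
            (t ^ (2 * (j : ℤ) + 1) - t ^ (-(2 * (j : ℤ) + 1)))
        else if (i : ℤ) = (j : ℤ) - 1 then
          Complex.I * ((q ^ ((n : ℤ) + (j : ℤ)) - q ^ (-((n : ℤ) + (j : ℤ)))) / (q - q⁻¹)) /
            (t ^ (2 * (j : ℤ) + 1) - t ^ (-(2 * (j : ℤ) + 1)))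
        else 0)) :
    Matrix.trace A =
      e1 * (∑ k ∈ Finset.range n, (t ^ (2 * (k : ℤ) + 1) + t ^ (-(2 * (k : ℤ) + 1)))) / (q - q⁻¹) ∧
    Matrix.trace A ≠ 0 ∧
    Matrix.trace B = e2 * ((q ^ (n : ℤ) - q ^ (-(n : ℤ))) / (q - q⁻¹)) / (t - t⁻¹) ∧
    Matrix.trace B ≠ 0 := by

  obtain ⟨r, hr⟩ : ∃ r : ℝ, q = (r : ℂ) :=
    ⟨q.re, by apply Complex.ext <;> simp [hqre]⟩
  obtain ⟨s, hs⟩ : ∃ s : ℝ, t = (s : ℂ) :=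
    ⟨t.re, by apply Complex.ext <;> simp [htre]⟩
  subst hr hs
  have hrpos : 0 < r := by simpa using hqpos
  have hspos : 0 < s := by simpa using htpos
  have hr1 : r ≠ 1 := fun h => hq1 (by rw [h]; norm_num)
  have hs2 : s ^ 2 = r := by
    have := ht2
    push_cast at this
    exact_mod_cast this
  have hs1 : s ≠ 1 := by
    intro h
    apply hr1
    rw [← hs2, h]; norm_num
  have hd : (r : ℂ) - (r : ℂ)⁻¹ ≠ 0 := by
    have : ((r : ℂ) - (r : ℂ)⁻¹) = ((r - r⁻¹ : ℝ) : ℂ) := by push_cast; ring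
    rw [this, Complex.ofReal_ne_zero]
    exact aux_sub_inv_ne r hrpos hr1
  have hdt : (s : ℂ) - (s : ℂ)⁻¹ ≠ 0 := by
    have : ((s : ℂ) - (s : ℂ)⁻¹) = ((s - s⁻¹ : ℝ) : ℂ) := by push_cast; ring
    rw [this, Complex.ofReal_ne_zero]
    exact aux_sub_inv_ne s hspos hs1
  have he1' : e1 ≠ 0 := by rcases he1 with h | h <;> simp [h]
  have he2' : e2 ≠ 0 := by rcases he2 with h | h <;> simp [h]
  -- trace A
  have hTA : Matrix.trace A =
      e1 * (∑ k ∈ Finset.range n,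
        ((s : ℂ) ^ (2 * (k : ℤ) + 1) + (s : ℂ) ^ (-(2 * (k : ℤ) + 1)))) / ((r : ℂ) - (r : ℂ)⁻¹) := by
    have : Matrix.trace A = ∑ i : Fin n,
        e1 * (((s : ℂ) ^ (2 * (i : ℤ) + 1) + (s : ℂ) ^ (-(2 * (i : ℤ) + 1))) / ((r : ℂ) - (r : ℂ)⁻¹)) := by
      simp [Matrix.trace, Matrix.diag, hA]
    rw [this, Fin.sum_univ_eq_sum_range
      (fun k => e1 * (((s : ℂ) ^ (2 * (k : ℤ) + 1) + (s : ℂ) ^ (-(2 * (k : ℤ) + 1))) / ((r : ℂ) - (r : ℂ)⁻¹)))]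
    simp only [← mul_div_assoc]
    rw [← Finset.sum_div, ← Finset.mul_sum]
  have hS : (∑ k ∈ Finset.range n,
      ((s : ℂ) ^ (2 * (k : ℤ) + 1) + (s : ℂ) ^ (-(2 * (k : ℤ) + 1)))) ≠ 0 := by
    have hcast : (∑ k ∈ Finset.range n,
        ((s : ℂ) ^ (2 * (k : ℤ) + 1) + (s : ℂ) ^ (-(2 * (k : ℤ) + 1)))) =
        ((∑ k ∈ Finset.range n, (s ^ (2 * (k : ℤ) + 1) + s ^ (-(2 * (k : ℤ) + 1)) : ℝ)) : ℂ) := by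
      push_cast; ring
    rw [hcast, ← Complex.ofReal_sum, Complex.ofReal_ne_zero]
    apply ne_of_gt
    apply Finset.sum_pos
    · intro k _
      have h1 : (0:ℝ) < s ^ (2 * (k : ℤ) + 1) := zpow_pos hspos _
      have h2 : (0:ℝ) < s ^ (-(2 * (k : ℤ) + 1)) := zpow_pos hspos _
      linarith
    · exact Finset.nonempty_range_iff.2 hn.ne'
  have hTAne : Matrix.trace A ≠ 0 := by
    rw [hTA]
    exact div_ne_zero (mul_ne_zero he1' hS) hd
  -- trace B
  have hX : ((r : ℂ) ^ (n : ℤ) - (r : ℂ) ^ (-(n : ℤ))) ≠ 0 := by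
    have hcast : ((r : ℂ) ^ (n : ℤ) - (r : ℂ) ^ (-(n : ℤ))) = ((r ^ n - (r ^ n)⁻¹ : ℝ) : ℂ) := by
      push_cast
      rw [zpow_neg, zpow_natCast]
    rw [hcast, Complex.ofReal_ne_zero]
    apply aux_sub_inv_ne (r ^ n) (pow_pos hrpos n)
    intro h
    rcases (pow_eq_one_iff_cases.1 h) with h' | h' | h'
    · omega
    · exact hr1 h'
    · linarith [h'.1]
  have hTB : Matrix.trace B =
      e2 * (((r : ℂ) ^ (n : ℤ) - (r : ℂ) ^ (-(n : ℤ))) / ((r : ℂ) - (r : ℂ)⁻¹)) / ((s : ℂ) - (s : ℂ)⁻¹) := by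
    have hdiag : ∀ i : Fin n, B i i =
        if i = (⟨0, hn⟩ : Fin n) then
          e2 * (((r : ℂ) ^ (n : ℤ) - (r : ℂ) ^ (-(n : ℤ))) / ((r : ℂ) - (r : ℂ)⁻¹)) / ((s : ℂ) - (s : ℂ)⁻¹)
        else 0 := by
      intro i
      rw [hB]
      by_cases h : (i : ℕ) = 0
      · simp [h, Fin.ext_iff]
      · have h1 : ¬ ((i : ℤ) = (i : ℤ) + 1) := by omega
        have h2 : ¬ ((i : ℤ) = (i : ℤ) - 1) := by omega
        simp [h, h1, h2, Fin.ext_iff]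
    rw [Matrix.trace]
    simp only [Matrix.diag]
    rw [Finset.sum_congr rfl (fun i _ => hdiag i)]
    simp
  have hTBne : Matrix.trace B ≠ 0 := by
    rw [hTB]
    exact div_ne_zero (mul_ne_zero he2' (div_ne_zero hX hd)) hdt
  exact ⟨hTA, hTAne, hTB, hTBne⟩
end
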